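/- Let k be a field and F : C → D a k-linear functor between small k-linear categories. Suppose 0 → M → D C(x1,-) → D C(x2,-) is an exact sequence in Mod C. Then applying F^! yields an exact sequence 0 → F^!(M) → F^!(D C(x1,-)) → F^!(D C(x2,-)) in Mod D; in particular, F^!(M) is isomorphic to the kernel of a morphism D D(F(x1),-) → D D(F(x2),-) between duals of corepresentable D-modules. -/

import Mathlib

open CategoryTheory CategoryTheory.Limits Opposite

/-- The opposite of a `k`-linear category is `k`-linear. -/
noncomputable instance oppositeLinear (k : Type) [Field k] (C : Type) [SmallCategory C]
    [Preadditive C] [Linear k C] : Linear k Cᵒᵖ where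
  homModule X Y := Equiv.module k (opEquiv X Y)
  smul_comp _ _ _ _ _ _ := Quiver.Hom.unop_inj (Linear.comp_smul _ _ _ _ _ _)
  comp_smul _ _ _ _ _ _ := Quiver.Hom.unop_inj (Linear.smul_comp _ _ _ _ _ _)

variable (k : Type) [Field k]

/-- The `C`-module `D C(x,-) : y ↦ Hom_k(C(x,y), k)`. -/
noncomputable def DCoyo (C : Type) [SmallCategory C] [Preadditive C] [Linear k C] (x : C) :
    Cᵒᵖ ⥤ ModuleCat.{0} k where
  obj y := ModuleCat.of k (Module.Dual k (x ⟶ y.unop))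
  map {y y'} f := ModuleCat.ofHom <| LinearMap.dualMap (Linear.rightComp k x f.unop)
  map_id y := by
    refine ModuleCat.hom_ext <| LinearMap.ext fun (φ : Module.Dual k (x ⟶ y.unop)) => LinearMap.ext fun g => ?_
    show φ (g ≫ 𝟙 y.unop) = φ g
    rw [Category.comp_id]
  map_comp {y y' y''} f g := by
    refine ModuleCat.hom_ext <| LinearMap.ext fun (φ : Module.Dual k (x ⟶ y.unop)) => LinearMap.ext fun h => ?_
    show φ (h ≫ (g.unop ≫ f.unop)) = φ ((h ≫ g.unop) ≫ f.unop)
    rw [Category.assoc]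

variable {C D : Type} [SmallCategory C] [SmallCategory D]
  [Preadditive C] [Preadditive D] [Linear k C] [Linear k D]

/-- The functor `F^! : Mod C ⥤ Mod D`, given by
`F^!(M)(y) = Hom_{Mod C}(Hom_D(F(-), y), M)`. -/
noncomputable def Fshriek (F : C ⥤ D) :
    (Cᵒᵖ ⥤ ModuleCat.{0} k) ⥤ (Dᵒᵖ ⥤ ModuleCat.{0} k) :=
  linearYoneda k (Cᵒᵖ ⥤ ModuleCat.{0} k) ⋙
    (Functor.whiskeringLeft Dᵒᵖ (Cᵒᵖ ⥤ ModuleCat.{0} k)ᵒᵖ (ModuleCat.{0} k)).obj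
      (linearYoneda k D ⋙ (Functor.whiskeringLeft Cᵒᵖ Dᵒᵖ (ModuleCat.{0} k)).obj F.op).op


/-- The `C`-module `Hom_D(F(-), y)`. -/
noncomputable def Ny (F : C ⥤ D) (y : Dᵒᵖ) : Cᵒᵖ ⥤ ModuleCat.{0} k :=
  F.op ⋙ (linearYoneda k D).obj y.unop

/-- Elements of `DCoyo` evaluated at an object are linear functionals. -/
noncomputable def dap {x : C} {z : Cᵒᵖ} (φ : (DCoyo k C x).obj z) :
    Module.Dual k (x ⟶ z.unop) :=
  show Module.Dual k (x ⟶ z.unop) from φ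

/-- Elements of `Ny` evaluated at an object are morphisms in `D`. -/
noncomputable def nap {F : C ⥤ D} {y : Dᵒᵖ} {z : Cᵒᵖ} (g : (Ny k F y).obj z) :
    F.obj z.unop ⟶ y.unop :=
  show F.obj z.unop ⟶ y.unop from g

/-- Elements of `(F^! M)(y)` are natural transformations `Ny ⟶ M`. -/
noncomputable def hap (F : C ⥤ D) (M : Cᵒᵖ ⥤ ModuleCat.{0} k) {y : Dᵒᵖ}
    (t : ((Fshriek k F).obj M).obj y) : Ny k F y ⟶ M :=
  show Ny k F y ⟶ M from t

/-- `Hom_{Mod C}(Hom_D(F(-),y), D C(x,-)) ≃ D (Hom_D(F x, y))`. -/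
noncomputable def shriekDCoyoEquiv (F : C ⥤ D) [F.Additive] [F.Linear k] (x : C) (y : Dᵒᵖ) :
    ((Ny k F y ⟶ DCoyo k C x : Type)) ≃ₗ[k] Module.Dual k (F.obj x ⟶ y.unop) where
  toFun η :=
    { toFun := fun f => dap k (η.app (op x) f) (𝟙 x)
      map_add' := fun f f' => by
        show dap k (η.app (op x) (f + f')) (𝟙 x) =
          dap k (η.app (op x) f) (𝟙 x) + dap k (η.app (op x) f') (𝟙 x)
        erw [map_add]; rfl
      map_smul' := fun c f => by
        show dap k (η.app (op x) (c • f)) (𝟙 x) = c • dap k (η.app (op x) f) (𝟙 x)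
        erw [map_smul]; rfl }
  map_add' η η' := rfl
  map_smul' c η := rfl
  invFun φ :=
    { app := fun z => ModuleCat.ofHom
        { toFun := fun g =>
            { toFun := fun u => φ (F.map u ≫ nap k g)
              map_add' := fun u u' => by
                show φ (F.map (u + u') ≫ nap k g) =
                  φ (F.map u ≫ nap k g) + φ (F.map u' ≫ nap k g)
                rw [F.map_add, Preadditive.add_comp, map_add]
              map_smul' := fun c u => by
                show φ (F.map (c • u) ≫ nap k g) = c • φ (F.map u ≫ nap k g)
                rw [Functor.map_smul, Linear.smul_comp, map_smul] }
          map_add' := fun g g' => LinearMap.ext fun u => by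
            show φ (F.map u ≫ (nap k g + nap k g')) =
              φ (F.map u ≫ nap k g) + φ (F.map u ≫ nap k g')
            rw [Preadditive.comp_add, map_add]
          map_smul' := fun c g => LinearMap.ext fun u => by
            show φ (F.map u ≫ (c • nap k g)) = c • φ (F.map u ≫ nap k g)
            rw [Linear.comp_smul, map_smul] }
      naturality := fun z z' h => ModuleCat.hom_ext <| LinearMap.ext fun g => LinearMap.ext fun u => by
        show φ (F.map u ≫ (F.map h.unop ≫ nap k g)) = φ (F.map (u ≫ h.unop) ≫ nap k g)
        rw [F.map_comp, Category.assoc] }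
  left_inv η := by
    ext z g
    refine LinearMap.ext fun u => ?_
    have h1 : η.app (op x) ((Ny k F y).map u.op g) = (DCoyo k C x).map u.op (η.app z g) :=
      ConcreteCategory.congr_hom (η.naturality u.op) g
    have h2 := DFunLike.congr_fun (congrArg (dap k) h1) (𝟙 x)
    show dap k (η.app (op x) (F.map u ≫ nap k g)) (𝟙 x) = dap k (η.app z g) u
    refine h2.trans ?_
    show dap k (η.app z g) (𝟙 x ≫ u) = dap k (η.app z g) u
    rw [Category.id_comp]
  right_inv φ := LinearMap.ext fun f => by
    show φ (F.map (𝟙 x) ≫ f) = φ f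
    rw [F.map_id, Category.id_comp]

/-- `F^!(D C(x,-)) ≅ D D(F x,-)`. -/
noncomputable def shriekDCoyoIso (F : C ⥤ D) [F.Additive] [F.Linear k] (x : C) :
    (Fshriek k F).obj (DCoyo k C x) ≅ DCoyo k D (F.obj x) :=
  NatIso.ofComponents (fun y => (shriekDCoyoEquiv k F x y).toModuleIso)
    (fun {y y'} d => rfl)

theorem shriek_left_exact (F : C ⥤ D) [F.Additive] [F.Linear k]
    (M : Cᵒᵖ ⥤ ModuleCat.{0} k) (x₁ x₂ : C)
    (α : M ⟶ DCoyo k C x₁) (β : DCoyo k C x₁ ⟶ DCoyo k C x₂)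
    [Mono α] (w : α ≫ β = 0) (hex : (ShortComplex.mk α β w).Exact) :
    Mono ((Fshriek k F).map α) ∧
    (∃ w' : (Fshriek k F).map α ≫ (Fshriek k F).map β = 0,
      (ShortComplex.mk ((Fshriek k F).map α) ((Fshriek k F).map β) w').Exact) ∧
    (∃ g : DCoyo k D (F.obj x₁) ⟶ DCoyo k D (F.obj x₂),
      Nonempty ((Fshriek k F).obj M ≅ kernel g)) := by
  have w' : (Fshriek k F).map α ≫ (Fshriek k F).map β = 0 := by
    ext y η
    show (hap k F M η ≫ α) ≫ β = 0
    rw [Category.assoc, w, Limits.comp_zero]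
  have hlift : ∀ {T : Dᵒᵖ ⥤ ModuleCat.{0} k} (kT : T ⟶ (Fshriek k F).obj (DCoyo k C x₁))
      (_ : kT ≫ (Fshriek k F).map β = 0) (y : Dᵒᵖ) (t : T.obj y),
      (hap k F (DCoyo k C x₁) (kT.app y t) ≫ β = 0) := by
    intro T kT hk y t
    have h2 := ConcreteCategory.congr_hom (NatTrans.congr_app hk y) t
    exact h2
  have hlim : IsLimit (KernelFork.ofι ((Fshriek k F).map α) w') := by
    refine KernelFork.IsLimit.ofι _ _
      (fun {T} kT hk =>
        { app := fun y => ModuleCat.ofHom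
            { toFun := fun t => hex.lift (hap k F (DCoyo k C x₁) (kT.app y t)) (hlift kT hk y t)
              map_add' := fun t t' => by
                rw [← cancel_mono α]
                show hex.lift (hap k F _ (kT.app y (t + t'))) _ ≫ α =
                  (hex.lift (hap k F _ (kT.app y t)) _ + hex.lift (hap k F _ (kT.app y t')) _) ≫ α
                rw [Preadditive.add_comp, hex.lift_f, hex.lift_f, hex.lift_f]
                show hap k F _ (kT.app y (t + t')) = hap k F _ (kT.app y t + kT.app y t')
                rw [map_add]
              map_smul' := fun c t => by
                rw [RingHom.id_apply, ← cancel_mono α]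
                show hex.lift (hap k F _ (kT.app y (c • t))) _ ≫ α =
                  (c • hex.lift (hap k F _ (kT.app y t)) _) ≫ α
                rw [Linear.smul_comp, hex.lift_f, hex.lift_f]
                show hap k F _ (kT.app y (c • t)) = hap k F _ (c • kT.app y t)
                rw [map_smul] }
          naturality := fun y y' d => ModuleCat.hom_ext <| LinearMap.ext fun t => by
            show hex.lift (hap k F _ (kT.app y' (T.map d t))) _ =
              ((Functor.whiskerLeft F.op ((linearYoneda k D).map d.unop) : Ny k F y' ⟶ Ny k F y) ≫
                hex.lift (hap k F _ (kT.app y t)) _)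
            refine (cancel_mono α).1 ?_
            show hex.lift (hap k F _ (kT.app y' (T.map d t))) _ ≫ α =
              ((Functor.whiskerLeft F.op ((linearYoneda k D).map d.unop) : Ny k F y' ⟶ Ny k F y) ≫
                hex.lift (hap k F _ (kT.app y t)) _) ≫ α
            rw [Category.assoc, hex.lift_f]
            erw [hex.lift_f (hap k F _ (kT.app y t)) (hlift kT hk y t)]
            have h : kT.app y' (T.map d t) =
                ((Fshriek k F).obj (DCoyo k C x₁)).map d (kT.app y t) :=
              ConcreteCategory.congr_hom (kT.naturality d) t
            rw [show hap k F (DCoyo k C x₁) (kT.app y' (T.map d t)) =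
                hap k F (DCoyo k C x₁)
                  (((Fshriek k F).obj (DCoyo k C x₁)).map d (kT.app y t)) from congrArg _ h]
            rfl })
      (fun {T} kT hk => by
        ext y t
        show hex.lift (hap k F _ (kT.app y t)) (hlift kT hk y t) ≫ α = hap k F _ (kT.app y t)
        rw [hex.lift_f])
      (fun {T} kT hk m hm => by
        ext y t
        have h := ConcreteCategory.congr_hom (NatTrans.congr_app hm y) t
        show hap k F M (m.app y t) = hex.lift (hap k F _ (kT.app y t)) (hlift kT hk y t)
        refine (cancel_mono α).1 ?_
        show hap k F M (m.app y t) ≫ α =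
          hex.lift (hap k F _ (kT.app y t)) (hlift kT hk y t) ≫ α
        rw [hex.lift_f]
        exact h)
  have hmono : Mono ((Fshriek k F).map α) := mono_of_isLimit_fork hlim
  refine ⟨hmono, ⟨w', ?_⟩, ?_⟩
  · exact ShortComplex.exact_of_f_is_kernel _ hlim
  · refine ⟨(shriekDCoyoIso k F x₁).inv ≫ (Fshriek k F).map β ≫ (shriekDCoyoIso k F x₂).hom,
      ⟨?_⟩⟩
    refine (hlim.conePointUniqueUpToIso (kernelIsKernel ((Fshriek k F).map β))) ≪≫
      (kernelCompMono ((Fshriek k F).map β) (shriekDCoyoIso k F x₂).hom).symm ≪≫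
      (kernelIsIsoComp (shriekDCoyoIso k F x₁).inv
        ((Fshriek k F).map β ≫ (shriekDCoyoIso k F x₂).hom)).symm
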